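/- Let λ_L, λ_R > 0, N ≥ 1, and j ∈ ℝ. The sequence φ_x = A + Bx + Cx² with A = λ_L, B = (−2λ_L + √((N+1)²j² + 4λ_Lλ_R))/(N+1), C = (λ_L + λ_R − √((N+1)²j² + 4λ_Lλ_R))/(N+1)² satisfies φ_0 = λ_L, φ_{N+1} = λ_R, φ_x ≥ 0 for 0 ≤ x ≤ N+1, and 4φ_x = √(j² + 4φ_{x−1}φ_x) + √(j² + 4φ_xφ_{x+1}) for x = 1, …, N. -/
import Mathlib


theorem quadratic_solution (lamL lamR : ℝ) (hL : 0 < lamL) (hR : 0 < lamR)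
    (N : ℕ) (hN : 1 ≤ N) (j : ℝ) (A B C : ℝ)
    (hA : A = lamL)
    (hB : B = (-2 * lamL + Real.sqrt ((N + 1)^2 * j^2 + 4 * lamL * lamR)) / (N + 1))
    (hC : C = (lamL + lamR - Real.sqrt ((N + 1)^2 * j^2 + 4 * lamL * lamR)) / (N + 1)^2)
    (φ : ℕ → ℝ) (hφ : ∀ x : ℕ, φ x = A + B * x + C * x^2) :
    φ 0 = lamL ∧ φ (N + 1) = lamR
      ∧ (∀ x : ℕ, x ≤ N + 1 → 0 ≤ φ x)
      ∧ (∀ x : ℕ, 1 ≤ x → x ≤ N →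
          4 * φ x = Real.sqrt (j^2 + 4 * φ (x - 1) * φ x)
            + Real.sqrt (j^2 + 4 * φ x * φ (x + 1))) := by
  set S := Real.sqrt ((N + 1)^2 * j^2 + 4 * lamL * lamR) with hSdef
  have hn : (0:ℝ) < (N:ℝ) + 1 := by positivity
  have hne : ((N:ℝ) + 1) ≠ 0 := hn.ne'
  have hargs : (0:ℝ) ≤ ((N:ℝ) + 1)^2 * j^2 + 4 * lamL * lamR := by positivity
  have hS2 : S^2 = ((N:ℝ) + 1)^2 * j^2 + 4 * lamL * lamR := Real.sq_sqrt hargs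
  have hSnn : 0 ≤ S := Real.sqrt_nonneg _
  have hj : j^2 = B^2 - 4*A*C := by
    rw [hA, hB, hC]
    field_simp
    linear_combination (-1 : ℝ) * hS2
  have hval : ∀ x : ℕ, ((N:ℝ)+1)^2 * φ x
      = lamL*(((N:ℝ)+1) - x)^2 + lamR*(x:ℝ)^2 + S*(x:ℝ)*(((N:ℝ)+1) - x) := by
    intro x
    rw [hφ x, hA, hB, hC]
    field_simp
    ring
  have hpos : ∀ x : ℕ, x ≤ N + 1 → 0 ≤ φ x := by
    intro x hx
    have hx' : (x:ℝ) ≤ (N:ℝ) + 1 := by exact_mod_cast hx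
    have hx0 : (0:ℝ) ≤ ((N:ℝ)+1) - x := by linarith
    have t1 : 0 ≤ lamL*(((N:ℝ)+1) - x)^2 := by positivity
    have t2 : 0 ≤ lamR*(x:ℝ)^2 := by positivity
    have t3 : 0 ≤ S*(x:ℝ)*(((N:ℝ)+1) - x) :=
      mul_nonneg (mul_nonneg hSnn (Nat.cast_nonneg x)) hx0
    have h2 : 0 ≤ ((N:ℝ)+1)^2 * φ x := by rw [hval x]; linarith
    have hp2 : (0:ℝ) < ((N:ℝ)+1)^2 := by positivity
    exact le_of_mul_le_mul_left (by simpa using h2) hp2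
  have hmidval : ∀ u : ℕ, ((N:ℝ)+1)^2 * (φ u + φ (u+1) - C)
      = 2*lamL*(((N:ℝ)+1) - u)*((N:ℝ) - u) + 2*lamR*(u:ℝ)*((u:ℝ)+1)
        + S*(2*(u:ℝ)*((N:ℝ) - u) + ((N:ℝ)+1)) := by
    intro u
    rw [hφ u, hφ (u+1), hA, hB, hC]
    push_cast
    field_simp
    ring
  have hmid : ∀ u : ℕ, (u:ℝ) ≤ (N:ℝ) → 0 ≤ φ u + φ (u+1) - C := by
    intro u hu
    have hu0 : (0:ℝ) ≤ (N:ℝ) - u := by linarith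
    have hu1 : (0:ℝ) ≤ ((N:ℝ)+1) - u := by linarith
    have t1 : 0 ≤ 2*lamL*(((N:ℝ)+1) - u)*((N:ℝ) - u) :=
      mul_nonneg (mul_nonneg (by linarith) hu1) hu0
    have t2 : 0 ≤ 2*lamR*(u:ℝ)*((u:ℝ)+1) := by positivity
    have t3 : 0 ≤ S*(2*(u:ℝ)*((N:ℝ) - u) + ((N:ℝ)+1)) := by
      apply mul_nonneg hSnn
      have : 0 ≤ 2*(u:ℝ)*((N:ℝ) - u) := mul_nonneg (by positivity) hu0
      linarith
    have h2 : 0 ≤ ((N:ℝ)+1)^2 * (φ u + φ (u+1) - C) := by rw [hmidval u]; linarith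
    have hp2 : (0:ℝ) < ((N:ℝ)+1)^2 := by positivity
    exact le_of_mul_le_mul_left (by simpa using h2) hp2
  refine ⟨?_, ?_, hpos, ?_⟩
  · rw [hφ 0, hA]; push_cast; ring
  · have h := hval (N+1)
    push_cast at h
    have h2 : ((N:ℝ)+1)^2 * φ (N+1) = ((N:ℝ)+1)^2 * lamR := by rw [h]; ring
    exact mul_left_cancel₀ (pow_ne_zero 2 hne) h2
  · intro x hx hxN
    have hx1 : ((x - 1 : ℕ):ℝ) = (x:ℝ) - 1 := by
      have := Nat.cast_sub (R := ℝ) hx; simpa using this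
    have ha : φ (x-1) = A + B*((x:ℝ)-1) + C*((x:ℝ)-1)^2 := by
      rw [hφ (x-1), hx1]
    have hb : φ x = A + B*(x:ℝ) + C*(x:ℝ)^2 := hφ x
    have hc : φ (x+1) = A + B*((x:ℝ)+1) + C*((x:ℝ)+1)^2 := by
      rw [hφ (x+1)]; push_cast; ring
    have hxN' : (x:ℝ) ≤ (N:ℝ) := by exact_mod_cast hxN
    have hxx : x - 1 + 1 = x := Nat.succ_pred_eq_of_pos hx
    have hP : 0 ≤ φ (x-1) + φ x - C := by
      have h := hmid (x-1) (by rw [hx1]; linarith)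
      rwa [hxx] at h
    have hQ : 0 ≤ φ x + φ (x+1) - C := hmid x hxN'
    have e1 : j^2 + 4 * φ (x-1) * φ x = (φ (x-1) + φ x - C)^2 := by
      rw [ha, hb]; linear_combination hj
    have e2 : j^2 + 4 * φ x * φ (x+1) = (φ x + φ (x+1) - C)^2 := by
      rw [hb, hc]; linear_combination hj
    rw [e1, e2, Real.sqrt_sq hP, Real.sqrt_sq hQ]
    have hsum : φ (x-1) + φ (x+1) = 2 * φ x + 2*C := by rw [ha, hb, hc]; ring
    linarith
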